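/- Let X be a compact Hausdorff space with an action of a countable discrete group G by homeomorphisms. Say that a finite G-quasi-invariant Radon measure ν on X satisfies the approximate invariance condition if for every ε > 0, every finite subset F ⊆ G and every finite family A of bounded nonnegative Borel functions on X, there exists a finitely supported function g from G to the Borel functions X → [0, 1] such that ∑_{t∈G} g(t)(x) = 1 for every x ∈ X and ∫_X ω(x) ∑_{t∈G} |g(s⁻¹t)(s⁻¹·x) − g(t)(x)| dν(x) < ε for every ω ∈ A and s ∈ F. Suppose μ is a finite G-quasi-invariant Radon measure on X, and (μ_λ) is a net of finite G-quasi-invariant Radon measures on X with sup_λ μ_λ(X) < ∞ such that each μ_λ satisfies the approximate invariance condition and sup{|∫_X f dμ_λ − ∫_X f dμ| : f ∈ C(X, ℝ), ‖f‖_∞ ≤ 1} → 0. Then μ satisfies the approximate invariance condition. (This is the content of: a uniform limit of uniformly bounded Zimmer-amenable quasi-invariant measures is Zimmer-amenable, via the Reiter-type characterization.) -/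

import Mathlib

open MeasureTheory Filter Topology Pointwise

/-- Outer regularity is preserved under addition of finite measures. -/
lemma outerRegular_add' {α : Type*} [MeasurableSpace α] [TopologicalSpace α]
    (μ ν : Measure α) [IsFiniteMeasure μ] [IsFiniteMeasure ν]
    [μ.OuterRegular] [ν.OuterRegular] : (μ + ν).OuterRegular := by
  constructor
  intro A hA r hr
  rw [Measure.add_apply] at hr
  obtain ⟨δ, hδ, hδr⟩ := ENNReal.lt_iff_exists_add_pos_lt.mp hr
  have hδ2 : ((δ : ENNReal) / 2) ≠ 0 := by
    simp [ENNReal.div_eq_zero_iff, hδ.ne']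
  obtain ⟨U1, hAU1, hU1o, hU1⟩ := Set.exists_isOpen_lt_add A (measure_ne_top μ A) hδ2
  obtain ⟨U2, hAU2, hU2o, hU2⟩ := Set.exists_isOpen_lt_add A (measure_ne_top ν A) hδ2
  refine ⟨U1 ∩ U2, Set.subset_inter hAU1 hAU2, hU1o.inter hU2o, ?_⟩
  calc (μ + ν) (U1 ∩ U2) = μ (U1 ∩ U2) + ν (U1 ∩ U2) := by rw [Measure.add_apply]
    _ ≤ μ U1 + ν U2 := add_le_add (measure_mono Set.inter_subset_left)
        (measure_mono Set.inter_subset_right)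
    _ < (μ A + δ/2) + (ν A + δ/2) := ENNReal.add_lt_add hU1 hU2
    _ = μ A + ν A + δ := by rw [add_add_add_comm, ENNReal.add_halves]
    _ < r := hδr

/-- Weak regularity is preserved under addition of finite measures. -/
lemma weaklyRegular_add' {α : Type*} [MeasurableSpace α] [TopologicalSpace α]
    [OpensMeasurableSpace α]
    (μ ν : Measure α) [IsFiniteMeasure μ] [IsFiniteMeasure ν]
    [μ.WeaklyRegular] [ν.WeaklyRegular] : (μ + ν).WeaklyRegular := by
  haveI := outerRegular_add' μ ν
  refine ⟨?_⟩
  intro U hU r hr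
  rw [Measure.add_apply] at hr
  obtain ⟨δ, hδ, hδr⟩ := ENNReal.lt_iff_exists_add_pos_lt.mp hr
  have hδ2 : ((δ : ENNReal) / 2) ≠ 0 := by
    simp [ENNReal.div_eq_zero_iff, hδ.ne']
  obtain ⟨K1, hK1U, hK1c, hK1⟩ := hU.measurableSet.exists_isClosed_lt_add (μ := μ)
    (measure_ne_top μ U) hδ2
  obtain ⟨K2, hK2U, hK2c, hK2⟩ := hU.measurableSet.exists_isClosed_lt_add (μ := ν)
    (measure_ne_top ν U) hδ2
  refine ⟨K1 ∪ K2, Set.union_subset hK1U hK2U, hK1c.union hK2c, ?_⟩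
  have h1 : μ U + ν U ≤ μ K1 + ν K2 + δ := by
    calc μ U + ν U ≤ (μ K1 + δ/2) + (ν K2 + δ/2) := add_le_add hK1.le hK2.le
      _ = μ K1 + ν K2 + δ := by rw [add_add_add_comm, ENNReal.add_halves]
  have h2 : r + δ < μ K1 + ν K2 + δ := lt_of_lt_of_le hδr h1
  have h3 : r < μ K1 + ν K2 :=
    (ENNReal.add_lt_add_iff_right ENNReal.coe_ne_top).mp h2
  calc r < μ K1 + ν K2 := h3
    _ ≤ μ (K1 ∪ K2) + ν (K1 ∪ K2) := add_le_add
        (measure_mono Set.subset_union_left) (measure_mono Set.subset_union_right)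
    _ = (μ + ν) (K1 ∪ K2) := by rw [Measure.add_apply]

/-- The Reiter-type approximate invariance condition for a finite `G`-quasi-invariant Radon
measure `ν` on `X` (equivalent to Zimmer-amenability): for every `ε > 0`, finite `F ⊆ G` and
finite family `A` of bounded nonnegative Borel functions there is a finitely supported
partition of unity `g : G → (X → [0,1])` with
`∫ ω(x) ∑_t |g(s⁻¹t)(s⁻¹ • x) − g(t)(x)| dν < ε` for all `ω ∈ A`, `s ∈ F`. -/
def ApproxInvCondition {X : Type*} [MeasurableSpace X]
    (G : Type*) [Group G] [MulAction G X] (ν : Measure X) : Prop :=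
  ∀ ε > (0 : ℝ), ∀ F : Finset G, ∀ A : Finset (X → ℝ),
    (∀ w ∈ A, Measurable w ∧ (∀ x, 0 ≤ w x) ∧ ∃ C : ℝ, ∀ x, w x ≤ C) →
    ∃ (g : G → X → ℝ) (S : Finset G),
      (∀ t ∉ S, g t = 0) ∧
      (∀ t, Measurable (g t)) ∧
      (∀ t x, g t x ∈ Set.Icc (0 : ℝ) 1) ∧
      (∀ x, ∑' t : G, g t x = 1) ∧
      ∀ w ∈ A, ∀ s ∈ F,
        ∫ x, w x * (∑' t : G, |g (s⁻¹ * t) (s⁻¹ • x) - g t x|) ∂ν < ε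

/-- A finite `G`-quasi-invariant Radon measure which is the uniform limit of
a uniformly bounded net of `G`-quasi-invariant Radon measures, each satisfying the
approximate invariance (Zimmer-amenability) condition, itself satisfies the approximate
invariance condition. -/
theorem stmt8 {X : Type*} [TopologicalSpace X] [CompactSpace X] [T2Space X]
    [MeasurableSpace X] [BorelSpace X]
    {G : Type*} [Group G] [Countable G] [MulAction G X] [ContinuousConstSMul G X]
    (μ : Measure X) [IsFiniteMeasure μ] (hreg : μ.Regular)
    (hqi : ∀ (g : G) (E : Set X), MeasurableSet E → μ E = 0 → μ (g • E) = 0)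
    {ι : Type*} (l : Filter ι) [l.NeBot] (μs : ι → Measure X)
    (hfin : ∀ i, IsFiniteMeasure (μs i)) (hregs : ∀ i, (μs i).Regular)
    (hqis : ∀ i, ∀ (g : G) (E : Set X), MeasurableSet E → μs i E = 0 → μs i (g • E) = 0)
    (hbdd : ∃ C : ENNReal, C ≠ ⊤ ∧ ∀ i, μs i Set.univ ≤ C)
    (hAI : ∀ i, ApproxInvCondition G (μs i))
    (hconv : ∀ ε > (0 : ℝ), ∀ᶠ i in l, ∀ f : C(X, ℝ), ‖f‖ ≤ 1 →
      |∫ x, f x ∂(μs i) - ∫ x, f x ∂μ| < ε) :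
    ApproxInvCondition G μ := by
  classical
  intro ε hε F A hA
  -- a uniform bound `M` for all functions in `A`
  obtain ⟨M, hM1, hMA⟩ : ∃ M : ℝ, 1 ≤ M ∧ ∀ w ∈ A, ∀ x, w x ≤ M := by
    have hB : ∀ w : X → ℝ, ∃ C : ℝ, w ∈ A → ∀ x, w x ≤ C := by
      intro w
      by_cases hw : w ∈ A
      · obtain ⟨C, hC⟩ := (hA w hw).2.2
        exact ⟨C, fun _ => hC⟩
      · exact ⟨0, fun h => absurd h hw⟩
    choose B hB using hB
    refine ⟨1 + ∑ w ∈ A, |B w|, le_add_of_nonneg_right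
      (Finset.sum_nonneg fun w _ => abs_nonneg _), ?_⟩
    intro w hw x
    calc w x ≤ B w := hB w hw x
      _ ≤ |B w| := le_abs_self _
      _ ≤ ∑ u ∈ A, |B u| := Finset.single_le_sum (fun u _ => abs_nonneg (B u)) hw
      _ ≤ 1 + ∑ u ∈ A, |B u| := by linarith
  have hM0 : (0 : ℝ) < M := lt_of_lt_of_le one_pos hM1
  set θ : ℝ := ε / 8 with hθdef
  have hθ0 : (0 : ℝ) < θ := by positivity
  have hδ0 : (0 : ℝ) < θ / (2 * M) := by positivity
  obtain ⟨i, hi⟩ := (hconv _ hδ0).exists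
  haveI := hfin i
  haveI : μ.WeaklyRegular := hreg.weaklyRegular
  haveI : (μs i).WeaklyRegular := (hregs i).weaklyRegular
  haveI : (μ + μs i).WeaklyRegular := weaklyRegular_add' μ (μs i)
  obtain ⟨g, S, hS, hgm, hIcc, hsum1, hint⟩ := hAI i (ε / 2) (by linarith) F A hA
  refine ⟨g, S, hS, hgm, hIcc, hsum1, ?_⟩
  intro w hw s hs
  have hintw := hint w hw s hs
  -- abbreviations
  set h : X → ℝ := fun x => w x * (∑' t : G, |g (s⁻¹ * t) (s⁻¹ • x) - g t x|) with hhdef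
  -- facts about the inner sum
  set T : Finset G := S ∪ S.image (fun u => s * u) with hT
  have hsupp : ∀ x : X, ∀ t ∉ T, |g (s⁻¹ * t) (s⁻¹ • x) - g t x| = 0 := by
    intro x t ht
    have h1 : t ∉ S := fun h => ht (Finset.mem_union_left _ h)
    have h2 : s⁻¹ * t ∉ S := fun h =>
      ht (Finset.mem_union_right _ (Finset.mem_image.mpr ⟨s⁻¹ * t, h, by group⟩))
    rw [hS t h1, hS _ h2]
    simp
  have hΦeq : ∀ x : X, (∑' t : G, |g (s⁻¹ * t) (s⁻¹ • x) - g t x|)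
      = ∑ t ∈ T, |g (s⁻¹ * t) (s⁻¹ • x) - g t x| := fun x => tsum_eq_sum (hsupp x)
  have hsmul : Measurable (fun x : X => s⁻¹ • x) := (continuous_const_smul s⁻¹).measurable
  have hgsummable : ∀ y : X, Summable fun t : G => g t y := fun y =>
    summable_of_ne_finset_zero (s := S) fun t ht => by rw [hS t ht]; rfl
  have hshiftsummable : ∀ y : X, Summable fun t : G => g (s⁻¹ * t) y := by
    intro y
    refine summable_of_ne_finset_zero (s := S.image (fun u => s * u)) fun t ht => ?_
    have : s⁻¹ * t ∉ S := fun hmem => ht (Finset.mem_image.mpr ⟨s⁻¹ * t, hmem, by group⟩)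
    rw [hS _ this]; rfl
  have hshift : ∀ y : X, ∑' t : G, g (s⁻¹ * t) y = 1 := by
    intro y
    have h := Equiv.tsum_eq (Equiv.mulLeft s⁻¹) (fun u => g u y)
    simpa using h.trans (hsum1 y)
  have hΦm : Measurable (fun x : X => ∑' t : G, |g (s⁻¹ * t) (s⁻¹ • x) - g t x|) := by
    have : (fun x : X => ∑' t : G, |g (s⁻¹ * t) (s⁻¹ • x) - g t x|)
        = fun x => ∑ t ∈ T, |g (s⁻¹ * t) (s⁻¹ • x) - g t x| := funext hΦeq
    rw [this]
    exact Finset.measurable_sum _ fun t _ => (((hgm _).comp hsmul).sub (hgm t)).abs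
  have hΦ0 : ∀ x : X, 0 ≤ ∑' t : G, |g (s⁻¹ * t) (s⁻¹ • x) - g t x| := by
    intro x
    rw [hΦeq]
    exact Finset.sum_nonneg fun t _ => abs_nonneg _
  have hΦle : ∀ x : X, (∑' t : G, |g (s⁻¹ * t) (s⁻¹ • x) - g t x|) ≤ 2 := by
    intro x
    rw [hΦeq]
    calc ∑ t ∈ T, |g (s⁻¹ * t) (s⁻¹ • x) - g t x|
        ≤ ∑ t ∈ T, (g (s⁻¹ * t) (s⁻¹ • x) + g t x) := by
          refine Finset.sum_le_sum fun t _ => ?_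
          have h1 := hIcc (s⁻¹ * t) (s⁻¹ • x)
          have h2 := hIcc t x
          rw [abs_sub_le_iff]
          constructor <;> linarith [h1.1, h2.1]
      _ = (∑ t ∈ T, g (s⁻¹ * t) (s⁻¹ • x)) + ∑ t ∈ T, g t x := Finset.sum_add_distrib
      _ ≤ 1 + 1 := by
          refine add_le_add ?_ ?_
          · calc ∑ t ∈ T, g (s⁻¹ * t) (s⁻¹ • x)
                ≤ ∑' t : G, g (s⁻¹ * t) (s⁻¹ • x) :=
                  Summable.sum_le_tsum T (fun t _ => (hIcc _ _).1) (hshiftsummable _)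
              _ = 1 := hshift _
          · calc ∑ t ∈ T, g t x ≤ ∑' t : G, g t x :=
                  Summable.sum_le_tsum T (fun t _ => (hIcc _ _).1) (hgsummable _)
              _ = 1 := hsum1 x
      _ = 2 := by norm_num
  -- facts about `h`
  have hwm := (hA w hw).1
  have hw0 := (hA w hw).2.1
  have hhm : Measurable h := hwm.mul hΦm
  have hh0 : ∀ x, 0 ≤ h x := fun x => mul_nonneg (hw0 x) (hΦ0 x)
  have hhle : ∀ x, h x ≤ 2 * M := by
    intro x
    calc h x ≤ M * 2 := mul_le_mul (hMA w hw x) (hΦle x) (hΦ0 x) hM0.le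
      _ = 2 * M := by ring
  have hint_h : ∀ (ν : Measure X), IsFiniteMeasure ν → Integrable h ν := by
    intro ν hν
    refine memLp_one_iff_integrable.mp (MemLp.of_bound hhm.aestronglyMeasurable (2 * M)
      (ae_of_all _ fun x => ?_))
    rw [Real.norm_eq_abs, abs_of_nonneg (hh0 x)]
    exact hhle x
  -- approximate `h` in L¹ of the sum measure by a bounded continuous function
  obtain ⟨f, hf, hfint⟩ :=
    (hint_h (μ + μs i) inferInstance).exists_boundedContinuous_integral_sub_le hθ0
  -- truncate it to `[0, 2M]`
  set f0 : X → ℝ := fun x => max 0 (min (f x) (2 * M)) with hf0def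
  have hf0c : Continuous f0 := continuous_const.max (f.continuous.min continuous_const)
  have hf00 : ∀ x, 0 ≤ f0 x := fun x => le_max_left _ _
  have hf0le : ∀ x, f0 x ≤ 2 * M := fun x =>
    max_le (by positivity) (min_le_right _ _)
  have key : ∀ x, |h x - f0 x| ≤ |h x - f x| := by
    intro x
    have h0 := hh0 x
    have h2 := hhle x
    have l1 : h x - f x ≤ |h x - f x| := le_abs_self _
    have l2 : -|h x - f x| ≤ h x - f x := neg_abs_le _
    have labs : 0 ≤ |h x - f x| := abs_nonneg _
    have hfx : f0 x = max 0 (min (f x) (2 * M)) := by rw [hf0def]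
    rw [abs_le, hfx]
    rcases le_total (f x) 0 with hb | hb
    · rw [min_eq_left (hb.trans (by positivity)), max_eq_left hb]
      constructor <;> linarith
    · rcases le_total (f x) (2 * M) with hc | hc
      · rw [min_eq_left hc, max_eq_right hb]
        constructor <;> linarith
      · rw [min_eq_right hc, max_eq_right (by positivity)]
        constructor <;> linarith
  have hf0int : ∀ (ν : Measure X), IsFiniteMeasure ν → Integrable f0 ν := by
    intro ν hν
    refine memLp_one_iff_integrable.mp (MemLp.of_bound hf0c.measurable.aestronglyMeasurable
      (2 * M) (ae_of_all _ fun x => ?_))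
    rw [Real.norm_eq_abs, abs_of_nonneg (hf00 x)]
    exact hf0le x
  -- the L¹ error bound transfers to both `μ` and `μs i`
  have step : ∀ (ν : Measure X), IsFiniteMeasure ν → ν ≤ μ + μs i →
      |∫ x, h x ∂ν - ∫ x, f0 x ∂ν| ≤ θ := by
    intro ν hν hle
    have hint1 : Integrable h ν := hint_h ν hν
    have hint2 : Integrable f0 ν := hf0int ν hν
    calc |∫ x, h x ∂ν - ∫ x, f0 x ∂ν| = |∫ x, (h x - f0 x) ∂ν| := by
          rw [integral_sub hint1 hint2]
      _ ≤ ∫ x, |h x - f0 x| ∂ν := by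
          simpa [Real.norm_eq_abs] using norm_integral_le_integral_norm (fun x => h x - f0 x) (μ := ν)
      _ ≤ ∫ x, |h x - f0 x| ∂(μ + μs i) := by
          refine integral_mono_measure hle (ae_of_all _ fun x => abs_nonneg _) ?_
          exact ((hint_h _ inferInstance).sub (hf0int _ inferInstance)).abs
      _ ≤ ∫ x, |h x - f x| ∂(μ + μs i) := by
          exact integral_mono ((hint_h _ inferInstance).sub (hf0int _ inferInstance)).abs
            ((hint_h _ inferInstance).sub hfint).abs key
      _ ≤ θ := by
          simpa [Real.norm_eq_abs] using hf
  -- compare the integrals of `f0` against `μ` and `μs i` using weak convergence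
  have hweak : |∫ x, f0 x ∂(μs i) - ∫ x, f0 x ∂μ| < θ := by
    set F0 : C(X, ℝ) := ⟨fun x => f0 x / (2 * M), (hf0c.div_const _)⟩ with hF0def
    have hF0norm : ‖F0‖ ≤ 1 := by
      refine (ContinuousMap.norm_le _ zero_le_one).mpr fun x => ?_
      simp only [hF0def, ContinuousMap.coe_mk]
      rw [Real.norm_eq_abs]
      have : (0 : ℝ) ≤ f0 x / (2 * M) := div_nonneg (hf00 x) (by positivity)
      rw [abs_of_nonneg this]
      exact div_le_one_of_le₀ (hf0le x) (by positivity)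
    have hdiff := hi F0 hF0norm
    have hFeq : ∀ (ν : Measure X), (∫ x, F0 x ∂ν) = (∫ x, f0 x ∂ν) / (2 * M) := by
      intro ν
      simp only [hF0def, ContinuousMap.coe_mk]
      exact integral_div _ _
    rw [hFeq, hFeq, div_sub_div_same, abs_div, abs_of_pos (by positivity : (0:ℝ) < 2 * M)]
      at hdiff
    have := (div_lt_div_iff_of_pos_right (by positivity : (0:ℝ) < 2 * M)).mp hdiff
    exact this
  -- put everything together
  have e1 := (abs_le.mp (step μ inferInstance (Measure.le_add_right le_rfl))).2
  have e2 := (abs_le.mp (step (μs i) inferInstance (Measure.le_add_left le_rfl))).1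
  have e3 := (abs_lt.mp hweak).1
  have e4 : (∫ x, h x ∂(μs i)) < ε / 2 := hintw
  have hθval : θ = ε / 8 := hθdef
  show (∫ x, h x ∂μ) < ε
  linarith [e1, e2, e3, e4]
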